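/- arXiv:1802.08376 — 7 statements merged into one kernel-verified Lean document; each statement's English description precedes it below -/
import Mathlib

section
/- Let 𝒱 be a finite set, f a non-increasing set function on 𝒱, γ ∈ (0,1] a supermodularity-ratio lower bound for f, and c a cost function on 𝒱. Let S* be a nonempty subset of 𝒱 with total cost b* = c(S*), and let s₁, …, s_m be a greedy sequence for (f, c) with G_i = {s₁,…,s_i}. Then for every i ∈ {1, …, m}: f(G_{i−1}) − f(G_i) ≥ (γ·c(s_i)/b*)·(f(G_{i−1}) − f(S*)). -/
open Finset Real

lemma key_telescope {α : Type*} [DecidableEq α]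
    (f : Finset α → ℝ) (γ : ℝ)
    (hratio : ∀ A B : Finset α, A ⊆ B → ∀ v ∉ B,
      f A - f (insert v A) ≥ γ * (f B - f (insert v B)))
    (G : Finset α) :
    ∀ T : Finset α, γ * (f G - f (G ∪ T)) ≤ ∑ v ∈ T, (f G - f (insert v G)) := by
  intro T
  induction T using Finset.induction_on with
  | empty => simp
  | @insert v T' hv ih =>
      rw [Finset.sum_insert hv, Finset.union_insert]
      by_cases hvG : v ∈ G ∪ T'
      · rw [Finset.insert_eq_self.2 hvG]
        have hvG' : v ∈ G := by
          rcases Finset.mem_union.1 hvG with h | h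
          · exact h
          · exact absurd h hv
        rw [Finset.insert_eq_self.2 hvG']
        linarith
      · have h := hratio G (G ∪ T') Finset.subset_union_left v hvG
        have : γ * (f G - f (insert v (G ∪ T'))) =
            γ * (f G - f (G ∪ T')) + γ * (f (G ∪ T') - f (insert v (G ∪ T'))) := by ring
        linarith

/-- generalization of Krause–Guestrin Lemma 2: lower bound on the marginal
gain of each greedy step, against any nonempty set `Sstar` with total cost `b* = c(Sstar)`.
The greedy sequence is zero-indexed: `s 0, s 1, …, s (m-1)`, with
`G i = {s 0, …, s (i-1)} = (range i).image s`. -/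
theorem stmt_2 {α : Type*} [Fintype α] [DecidableEq α]
    (f : Finset α → ℝ)
    -- `f` is non-increasing
    (hmono : ∀ A B : Finset α, A ⊆ B → f B ≤ f A)
    -- `γ ∈ (0,1]` is a supermodularity-ratio lower bound for `f`
    (γ : ℝ) (hγ0 : 0 < γ) (hγ1 : γ ≤ 1)
    (hratio : ∀ A B : Finset α, A ⊆ B → ∀ v ∉ B,
      f A - f (insert v A) ≥ γ * (f B - f (insert v B)))
    -- positive costs
    (c : α → ℝ) (hc : ∀ v, 0 < c v)
    -- a nonempty set `Sstar` with total cost `b* = ∑ v ∈ Sstar, c v`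
    (Sstar : Finset α) (hSstar : Sstar.Nonempty)
    -- a greedy sequence of length `m`: pairwise-distinct elements, each maximizing
    -- the cost-normalized marginal gain over all elements outside the current set
    (m : ℕ) (s : ℕ → α)
    (hdist : ∀ i < m, s i ∉ (Finset.range i).image s)
    (hgreedy : ∀ i < m, ∀ a ∉ (Finset.range i).image s,
      (f ((Finset.range i).image s) - f (insert a ((Finset.range i).image s))) / c a ≤
        (f ((Finset.range i).image s) -
            f (insert (s i) ((Finset.range i).image s))) / c (s i)) :
    ∀ i < m,
      f ((Finset.range i).image s) - f ((Finset.range (i + 1)).image s) ≥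
        γ * c (s i) / (∑ v ∈ Sstar, c v) *
          (f ((Finset.range i).image s) - f Sstar) := by
  intro i hi
  set G := (Finset.range i).image s with hG
  have hsucc : (Finset.range (i + 1)).image s = insert (s i) G := by
    rw [Finset.range_add_one, Finset.image_insert]
  rw [hsucc]
  set δ := f G - f (insert (s i) G) with hδ
  have hδ0 : 0 ≤ δ := by
    have := hmono G (insert (s i) G) (Finset.subset_insert _ _)
    linarith
  have hcsi : 0 < c (s i) := hc (s i)
  have hb : 0 < ∑ v ∈ Sstar, c v :=
    Finset.sum_pos (fun v _ => hc v) hSstar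
  -- each term bounded
  have hterm : ∀ v ∈ Sstar, f G - f (insert v G) ≤ c v * (δ / c (s i)) := by
    intro v _
    by_cases hvG : v ∈ G
    · rw [Finset.insert_eq_self.2 hvG]
      have : 0 ≤ c v * (δ / c (s i)) :=
        mul_nonneg (hc v).le (div_nonneg hδ0 hcsi.le)
      linarith
    · have h := hgreedy i hi v hvG
      rw [div_le_iff₀ (hc v)] at h
      calc f G - f (insert v G) ≤ δ / c (s i) * c v := h
        _ = c v * (δ / c (s i)) := by ring
  have hsum : ∑ v ∈ Sstar, (f G - f (insert v G)) ≤
      (∑ v ∈ Sstar, c v) * (δ / c (s i)) := by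
    rw [Finset.sum_mul]
    exact Finset.sum_le_sum hterm
  have htel := key_telescope f γ hratio G Sstar
  have hmon2 : f (G ∪ Sstar) ≤ f Sstar :=
    hmono Sstar (G ∪ Sstar) Finset.subset_union_right
  have hmain : γ * (f G - f Sstar) ≤ (∑ v ∈ Sstar, c v) * (δ / c (s i)) := by
    have h1 : γ * (f G - f Sstar) ≤ γ * (f G - f (G ∪ Sstar)) := by
      apply mul_le_mul_of_nonneg_left _ hγ0.le
      linarith
    linarith
  rw [ge_iff_le, div_mul_eq_mul_div, div_le_iff₀ hb]
  calc γ * c (s i) * (f G - f Sstar) = c (s i) * (γ * (f G - f Sstar)) := by ring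
    _ ≤ c (s i) * ((∑ v ∈ Sstar, c v) * (δ / c (s i))) :=
        mul_le_mul_of_nonneg_left hmain hcsi.le
    _ = δ * ∑ v ∈ Sstar, c v := by field_simp
end

section
/- Let 𝒱 be a finite set, f a non-increasing set function on 𝒱, γ ∈ (0,1] a supermodularity-ratio lower bound for f, and c a cost function on 𝒱. Let S* be a nonempty subset of 𝒱 with total cost b* = c(S*), and let s₁, …, s_m be a greedy sequence for (f, c) with G_i = {s₁,…,s_i}. Assume γ·c(s_j) ≤ b* for every j ∈ {1,…,m} and that the accumulated cost satisfies c(s₁) + ⋯ + c(s_m) ≥ b*. Then f(∅) − f(G_m) ≥ (1 − e^{−γ})·(f(∅) − f(S*)). -/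
open Finset Real

/-- if the greedy sequence's accumulated cost reaches `b* = c(Sstar)`, then
`f(∅) − f(G_m) ≥ (1 − e^{−γ})·(f(∅) − f(Sstar))`. Zero-indexed greedy sequence
`s 0, …, s (m-1)`, with `G m = (range m).image s`. -/
theorem stmt_4 {α : Type*} [Fintype α] [DecidableEq α]
    (f : Finset α → ℝ)
    (hmono : ∀ A B : Finset α, A ⊆ B → f B ≤ f A)
    (γ : ℝ) (hγ0 : 0 < γ) (hγ1 : γ ≤ 1)
    (hratio : ∀ A B : Finset α, A ⊆ B → ∀ v ∉ B,
      f A - f (insert v A) ≥ γ * (f B - f (insert v B)))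
    (c : α → ℝ) (hc : ∀ v, 0 < c v)
    (Sstar : Finset α) (hSstar : Sstar.Nonempty)
    (m : ℕ) (s : ℕ → α)
    (hdist : ∀ i < m, s i ∉ (Finset.range i).image s)
    (hgreedy : ∀ i < m, ∀ a ∉ (Finset.range i).image s,
      (f ((Finset.range i).image s) - f (insert a ((Finset.range i).image s))) / c a ≤
        (f ((Finset.range i).image s) -
            f (insert (s i) ((Finset.range i).image s))) / c (s i))
    (hcost : ∀ j < m, γ * c (s j) ≤ ∑ v ∈ Sstar, c v)
    -- accumulated cost of the greedy sequence reaches `b*`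
    (haccum : ∑ j ∈ Finset.range m, c (s j) ≥ ∑ v ∈ Sstar, c v) :
    f ∅ - f ((Finset.range m).image s) ≥
      (1 - Real.exp (-γ)) * (f ∅ - f Sstar) := by
  set B : ℝ := ∑ v ∈ Sstar, c v with hB
  have hBpos : 0 < B := Finset.sum_pos (fun v _ => hc v) hSstar
  -- Lemma A: chain bound
  have lemA : ∀ (T G : Finset α),
      γ * (f G - f (G ∪ T)) ≤ ∑ v ∈ T \ G, (f G - f (insert v G)) := by
    intro T
    induction T using Finset.induction_on with
    | empty => intro G; simp
    | @insert a T haT ih =>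
        intro G
        by_cases haG : a ∈ G
        · have h1 : G ∪ insert a T = G ∪ T := by
            rw [Finset.union_insert, Finset.insert_eq_self.mpr (Finset.mem_union_left _ haG)]
          have h2 : insert a T \ G = T \ G := Finset.insert_sdiff_of_mem _ haG
          rw [h1, h2]; exact ih G
        · have h1 : G ∪ insert a T = insert a (G ∪ T) := Finset.union_insert _ _ _
          have h2 : insert a T \ G = insert a (T \ G) :=
            Finset.insert_sdiff_of_notMem _ haG
          have haTG : a ∉ T \ G := fun h => haT (Finset.mem_sdiff.mp h).1
          have haU : a ∉ G ∪ T := by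
            simp only [Finset.mem_union, not_or]; exact ⟨haG, haT⟩
          have hr := hratio G (G ∪ T) Finset.subset_union_left a haU
          have := ih G
          rw [h1, h2, Finset.sum_insert haTG]
          linarith
  -- per-step inequality
  have step : ∀ i < m,
      γ * c (s i) * (f ((Finset.range i).image s) - f Sstar) ≤
        B * (f ((Finset.range i).image s) -
          f (insert (s i) ((Finset.range i).image s))) := by
    intro i him
    set G : Finset α := (Finset.range i).image s with hG
    set d : ℝ := f G - f (insert (s i) G) with hd
    have hd0 : 0 ≤ d := by
      have := hmono G (insert (s i) G) (Finset.subset_insert _ _)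
      linarith
    have hcs := hc (s i)
    -- each element bound
    have hsum : ∑ v ∈ Sstar \ G, (f G - f (insert v G)) ≤ B * (d / c (s i)) := by
      calc ∑ v ∈ Sstar \ G, (f G - f (insert v G))
          ≤ ∑ v ∈ Sstar \ G, c v * (d / c (s i)) := by
            refine Finset.sum_le_sum ?_
            intro v hv
            have hvG : v ∉ G := (Finset.mem_sdiff.mp hv).2
            have hg := hgreedy i him v hvG
            rw [div_le_div_iff₀ (hc v) hcs] at hg
            rw [← mul_div_assoc, le_div_iff₀ hcs]
            simp only [hd]
            nlinarith [hg]
        _ ≤ ∑ v ∈ Sstar, c v * (d / c (s i)) := by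
            refine Finset.sum_le_sum_of_subset_of_nonneg (Finset.sdiff_subset) ?_
            intro v _ _
            exact mul_nonneg (hc v).le (div_nonneg hd0 hcs.le)
        _ = B * (d / c (s i)) := by rw [← Finset.sum_mul]
    have hA := lemA Sstar G
    have hmono' : f (G ∪ Sstar) ≤ f Sstar :=
      hmono Sstar (G ∪ Sstar) Finset.subset_union_right
    have h1 : γ * (f G - f Sstar) ≤ B * (d / c (s i)) := by
      have : γ * (f G - f Sstar) ≤ γ * (f G - f (G ∪ Sstar)) := by
        apply mul_le_mul_of_nonneg_left _ hγ0.le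
        linarith
      linarith [hA.trans hsum]
    have : γ * (f G - f Sstar) * c (s i) ≤ B * (d / c (s i)) * c (s i) :=
      mul_le_mul_of_nonneg_right h1 hcs.le
    calc γ * c (s i) * (f G - f Sstar) = γ * (f G - f Sstar) * c (s i) := by ring
      _ ≤ B * (d / c (s i)) * c (s i) := this
      _ = B * d := by field_simp
  -- iterate
  set h : ℕ → ℝ := fun i => f ((Finset.range i).image s) - f Sstar with hh
  have h0nonneg : 0 ≤ h 0 := by
    have := hmono ∅ Sstar (Finset.empty_subset _)
    simp [hh]
    linarith
  have key : ∀ n ≤ m, h n ≤ (∏ i ∈ Finset.range n, (1 - γ * c (s i) / B)) * h 0 := by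
    intro n hn
    induction n with
    | zero => simp
    | succ n ih =>
        have hnm : n < m := hn
        have ih' := ih (Nat.le_of_lt hnm)
        have hfac : 0 ≤ 1 - γ * c (s n) / B := by
          have := hcost n hnm
          rw [sub_nonneg, div_le_one hBpos]
          exact this
        have hstep := step n hnm
        have hsucc : (Finset.range (n+1)).image s
            = insert (s n) ((Finset.range n).image s) := by
          rw [Finset.range_add_one, Finset.image_insert]
        have hrec : h (n+1) ≤ (1 - γ * c (s n) / B) * h n := by
          simp only [hh, hsucc]
          have : γ * c (s n) / B * (f ((Finset.range n).image s) - f Sstar)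
              ≤ f ((Finset.range n).image s) - f (insert (s n) ((Finset.range n).image s)) := by
            rw [div_mul_eq_mul_div, div_le_iff₀ hBpos]
            linarith [hstep]
          nlinarith [this]
        calc h (n+1) ≤ (1 - γ * c (s n) / B) * h n := hrec
          _ ≤ (1 - γ * c (s n) / B) * ((∏ i ∈ Finset.range n, (1 - γ * c (s i) / B)) * h 0) :=
              mul_le_mul_of_nonneg_left ih' hfac
          _ = (∏ i ∈ Finset.range (n+1), (1 - γ * c (s i) / B)) * h 0 := by
              rw [Finset.prod_range_succ]; ring
  have hprod : (∏ i ∈ Finset.range m, (1 - γ * c (s i) / B)) ≤ Real.exp (-γ) := by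
    calc (∏ i ∈ Finset.range m, (1 - γ * c (s i) / B))
        ≤ ∏ i ∈ Finset.range m, Real.exp (-(γ * c (s i) / B)) := by
          refine Finset.prod_le_prod ?_ ?_
          · intro i hi
            have := hcost i (Finset.mem_range.mp hi)
            rw [sub_nonneg, div_le_one hBpos]; exact this
          · intro i _
            have := Real.add_one_le_exp (-(γ * c (s i) / B))
            linarith
      _ = Real.exp (-∑ i ∈ Finset.range m, γ * c (s i) / B) := by
          rw [← Real.exp_sum]; congr 1; rw [← Finset.sum_neg_distrib]
      _ ≤ Real.exp (-γ) := by
          apply Real.exp_le_exp.mpr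
          rw [neg_le_neg_iff]
          have : ∑ i ∈ Finset.range m, γ * c (s i) / B
              = γ * (∑ i ∈ Finset.range m, c (s i)) / B := by
            rw [Finset.mul_sum, Finset.sum_div]
          rw [this, le_div_iff₀ hBpos]
          nlinarith [haccum]
  have hm : h m ≤ Real.exp (-γ) * h 0 := by
    calc h m ≤ (∏ i ∈ Finset.range m, (1 - γ * c (s i) / B)) * h 0 := key m le_rfl
      _ ≤ Real.exp (-γ) * h 0 := mul_le_mul_of_nonneg_right hprod h0nonneg
  have h0eq : h 0 = f ∅ - f Sstar := by simp [hh]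
  have hmeq : h m = f ((Finset.range m).image s) - f Sstar := rfl
  rw [← h0eq]
  nlinarith [hm, h0nonneg]
end

section
/- Let 𝒱 be a finite set, f a non-increasing set function on 𝒱, γ ∈ (0,1] a supermodularity-ratio lower bound for f, c a cost function on 𝒱, and b > 0 a budget with c(v) ≤ b for every v ∈ 𝒱. Let S* ⊆ 𝒱 satisfy c(S*) ≤ b, and assume γ·c(v) ≤ c(S*) for every v ∈ 𝒱. Let s₁, …, s_{l+1} be a greedy sequence for (f, c) with G_i = {s₁,…,s_i} such that c(G_l) ≤ b and c(G_{l+1}) > b. Let s ∈ 𝒱 minimize f({i}) over all i ∈ 𝒱 with c(i) ≤ b, and set S₁ = {s}. Then max{ f(∅) − f(S₁), f(∅) − f(G_l) } ≥ (γ/2)·(1 − e^{−γ})·(f(∅) − f(S*)). -/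
open Finset Real

/-- suboptimality bound `(γ/2)·(1 − e^{−γ})` for the cost-constrained greedy
algorithm. Zero-indexed greedy sequence `g 0, …, g l` of length `l + 1`, with
`G i = (range i).image g`; `c(G_l) ≤ b` and `c(G_{l+1}) > b`. The element `s` minimizes
`f({i})` over all `i` with `c(i) ≤ b`, and `S₁ = {s}`. -/
theorem stmt_5 {α : Type*} [Fintype α] [DecidableEq α]
    (f : Finset α → ℝ)
    (hmono : ∀ A B : Finset α, A ⊆ B → f B ≤ f A)
    (γ : ℝ) (hγ0 : 0 < γ) (hγ1 : γ ≤ 1)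
    (hratio : ∀ A B : Finset α, A ⊆ B → ∀ v ∉ B,
      f A - f (insert v A) ≥ γ * (f B - f (insert v B)))
    (c : α → ℝ) (hc : ∀ v, 0 < c v)
    -- a budget `b > 0` with `c(v) ≤ b` for every element `v`
    (b : ℝ) (hb : 0 < b) (hcb : ∀ v, c v ≤ b)
    -- `Sstar` is within budget, and `γ·c(v) ≤ c(Sstar)` for every `v`
    (Sstar : Finset α) (hSb : ∑ v ∈ Sstar, c v ≤ b)
    (hvS : ∀ v, γ * c v ≤ ∑ w ∈ Sstar, c w)
    -- greedy sequence `g 0, …, g l` (length `l + 1`)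
    (l : ℕ) (g : ℕ → α)
    (hdist : ∀ i < l + 1, g i ∉ (Finset.range i).image g)
    (hgreedy : ∀ i < l + 1, ∀ a ∉ (Finset.range i).image g,
      (f ((Finset.range i).image g) - f (insert a ((Finset.range i).image g))) / c a ≤
        (f ((Finset.range i).image g) -
            f (insert (g i) ((Finset.range i).image g))) / c (g i))
    -- `c(G_l) ≤ b` and `c(G_{l+1}) > b`
    (hGl : ∑ v ∈ (Finset.range l).image g, c v ≤ b)
    (hGl1 : ∑ v ∈ (Finset.range (l + 1)).image g, c v > b)
    -- `s` minimizes `f({i})` over all `i ∈ 𝒱` with `c(i) ≤ b`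
    (s : α) (hs : c s ≤ b) (hsmin : ∀ i : α, c i ≤ b → f {s} ≤ f {i}) :
    max (f ∅ - f {s}) (f ∅ - f ((Finset.range l).image g)) ≥
      γ / 2 * (1 - Real.exp (-γ)) * (f ∅ - f Sstar) := by

  classical
  set G : ℕ → Finset α := fun i => (Finset.range i).image g with hGdef
  set C : ℝ := ∑ w ∈ Sstar, c w with hCdef
  have hC : 0 < C := lt_of_lt_of_le (mul_pos hγ0 (hc s)) (hvS s)
  have hGsucc : ∀ i, G (i + 1) = insert (g i) (G i) := by
    intro i
    simp [hGdef, Finset.range_add_one, Finset.image_insert]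
  have hgain_nonneg : ∀ (A : Finset α) (v : α), 0 ≤ f A - f (insert v A) :=
    fun A v => sub_nonneg.2 (hmono A _ (Finset.subset_insert v A))
  -- Lemma A: telescoping over a set T
  have lemA : ∀ T S : Finset α, γ * (f S - f (S ∪ T)) ≤ ∑ v ∈ T, (f S - f (insert v S)) := by
    intro T
    induction T using Finset.induction_on with
    | empty => intro S; simp
    | @insert a T ha ih =>
      intro S
      rw [Finset.sum_insert ha]
      by_cases haS : a ∈ S
      · have hST : S ∪ insert a T = S ∪ T := by
          rw [Finset.union_insert, Finset.insert_eq_self.2 (Finset.mem_union_left _ haS)]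
        have haS' : insert a S = S := Finset.insert_eq_self.2 haS
        rw [hST, haS']
        have := ih S
        linarith
      · by_cases haT : a ∈ S ∪ T
        · have haT' : a ∈ T := by
            rcases Finset.mem_union.1 haT with h | h
            · exact absurd h haS
            · exact h
          exact absurd haT' ha
        · have hST : S ∪ insert a T = insert a (S ∪ T) := by
            rw [Finset.union_insert]
          have hr := hratio S (S ∪ T) Finset.subset_union_left a haT
          have := ih S
          have hg := hgain_nonneg S a
          rw [hST]
          have hsplit : γ * (f S - f (insert a (S ∪ T))) =
              γ * (f S - f (S ∪ T)) + γ * (f (S ∪ T) - f (insert a (S ∪ T))) := by ring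
          linarith
  -- key per-step inequality
  have key : ∀ i < l + 1,
      γ * (f (G i) - f Sstar) * c (g i) ≤ C * (f (G i) - f (G (i + 1))) := by
    intro i hi
    have h1 : γ * (f (G i) - f Sstar) ≤ ∑ v ∈ Sstar, (f (G i) - f (insert v (G i))) := by
      have hm : f (G i ∪ Sstar) ≤ f Sstar := hmono Sstar _ Finset.subset_union_right
      have := lemA Sstar (G i)
      nlinarith
    have h2 : ∀ v ∈ Sstar, f (G i) - f (insert v (G i)) ≤
        c v * ((f (G i) - f (G (i + 1))) / c (g i)) := by
      intro v _
      by_cases hv : v ∈ G i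
      · rw [Finset.insert_eq_self.2 hv, sub_self]
        have h0 : 0 ≤ f (G i) - f (G (i + 1)) := by
          rw [hGsucc i]; exact hgain_nonneg _ _
        exact mul_nonneg (hc v).le (div_nonneg h0 (hc (g i)).le)
      · have hg := hgreedy i hi v hv
        have h := (div_le_div_iff₀ (hc v) (hc (g i))).1 hg
        rw [hGsucc i, ← mul_div_assoc, le_div_iff₀ (hc (g i))]
        nlinarith
    have h3 : ∑ v ∈ Sstar, (f (G i) - f (insert v (G i))) ≤
        C * ((f (G i) - f (G (i + 1))) / c (g i)) := by
      calc ∑ v ∈ Sstar, (f (G i) - f (insert v (G i)))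
          ≤ ∑ v ∈ Sstar, c v * ((f (G i) - f (G (i + 1))) / c (g i)) :=
            Finset.sum_le_sum h2
        _ = C * ((f (G i) - f (G (i + 1))) / c (g i)) := by
            rw [← Finset.sum_mul]
    have h4 : γ * (f (G i) - f Sstar) ≤ C * (f (G i) - f (G (i + 1))) / c (g i) := by
      rw [mul_div_assoc]; linarith
    rw [le_div_iff₀ (hc (g i))] at h4
    linarith
  have hpos : ∀ j, 0 ≤ 1 - γ * c (g j) / C := by
    intro j
    rw [sub_nonneg, div_le_one hC]
    exact hvS (g j)
  have hδ0 : 0 ≤ f ∅ - f Sstar :=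
    sub_nonneg.2 (hmono ∅ Sstar (Finset.empty_subset _))
  have hstep : ∀ i < l + 1, f (G (i + 1)) - f Sstar ≤
      (1 - γ * c (g i) / C) * (f (G i) - f Sstar) := by
    intro i hi
    have h := key i hi
    rw [← mul_le_mul_iff_right₀ hC]
    have hexpand : C * ((1 - γ * c (g i) / C) * (f (G i) - f Sstar)) =
        (C - γ * c (g i)) * (f (G i) - f Sstar) := by
      field_simp
    rw [hexpand]
    nlinarith
  have hprod : ∀ i ≤ l + 1, f (G i) - f Sstar ≤
      (∏ j ∈ Finset.range i, (1 - γ * c (g j) / C)) * (f ∅ - f Sstar) := by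
    intro i
    induction i with
    | zero => intro _; simp [hGdef]
    | succ n ih =>
      intro hn
      have h1 := hstep n (by omega)
      have h2 := ih (by omega)
      have h3 := mul_le_mul_of_nonneg_left h2 (hpos n)
      rw [Finset.prod_range_succ]
      calc f (G (n + 1)) - f Sstar ≤ (1 - γ * c (g n) / C) * (f (G n) - f Sstar) := h1
        _ ≤ (1 - γ * c (g n) / C) *
            ((∏ j ∈ Finset.range n, (1 - γ * c (g j) / C)) * (f ∅ - f Sstar)) := h3
        _ = (∏ j ∈ Finset.range n, (1 - γ * c (g j) / C)) * (1 - γ * c (g n) / C) *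
            (f ∅ - f Sstar) := by ring
  -- sum over image equals sum over range
  have hinj : ∀ x ∈ Finset.range (l + 1), ∀ y ∈ Finset.range (l + 1), g x = g y → x = y := by
    intro x hx y hy hxy
    by_contra hne
    rcases Nat.lt_or_ge x y with h | h
    · exact hdist y (Finset.mem_range.1 hy)
        (Finset.mem_image.2 ⟨x, Finset.mem_range.2 h, hxy⟩)
    · have h' : y < x := lt_of_le_of_ne h fun e => hne e.symm
      exact hdist x (Finset.mem_range.1 hx)
        (Finset.mem_image.2 ⟨y, Finset.mem_range.2 h', hxy.symm⟩)
  have hsum : ∑ v ∈ G (l + 1), c v = ∑ j ∈ Finset.range (l + 1), c (g j) :=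
    Finset.sum_image hinj
  have hsumC : C < ∑ j ∈ Finset.range (l + 1), c (g j) := by
    rw [← hsum]
    exact lt_of_le_of_lt hSb hGl1
  have hexp : ∏ j ∈ Finset.range (l + 1), (1 - γ * c (g j) / C) ≤ Real.exp (-γ) := by
    calc ∏ j ∈ Finset.range (l + 1), (1 - γ * c (g j) / C)
        ≤ ∏ j ∈ Finset.range (l + 1), Real.exp (-(γ * c (g j) / C)) := by
          apply Finset.prod_le_prod (fun j _ => hpos j)
          intro j _
          nlinarith [Real.add_one_le_exp (-(γ * c (g j) / C))]
      _ = Real.exp (∑ j ∈ Finset.range (l + 1), -(γ * c (g j) / C)) :=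
          (Real.exp_sum _ _).symm
      _ ≤ Real.exp (-γ) := by
          apply Real.exp_le_exp.2
          have hsum2 : ∑ j ∈ Finset.range (l + 1), -(γ * c (g j) / C) =
              -(γ * (∑ j ∈ Finset.range (l + 1), c (g j)) / C) := by
            rw [Finset.mul_sum, Finset.sum_div, ← Finset.sum_neg_distrib]
          rw [hsum2, neg_le_neg_iff]
          rw [le_div_iff₀ hC]
          nlinarith
  have hfinal : f (G (l + 1)) - f Sstar ≤ Real.exp (-γ) * (f ∅ - f Sstar) :=
    le_trans (hprod (l + 1) le_rfl) (mul_le_mul_of_nonneg_right hexp hδ0)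
  -- last marginal gain bound
  have hlast : γ * (f (G l) - f (G (l + 1))) ≤ f ∅ - f {s} := by
    have h1 := hratio ∅ (G l) (Finset.empty_subset _) (g l) (hdist l (by omega))
    have h2 := hsmin (g l) (hcb (g l))
    rw [hGsucc l]
    have : insert (g l) (∅ : Finset α) = {g l} := rfl
    rw [this] at h1
    linarith
  set M := max (f ∅ - f {s}) (f ∅ - f (G l)) with hM
  have hM1 : f ∅ - f {s} ≤ M := le_max_left _ _
  have hM2 : f ∅ - f (G l) ≤ M := le_max_right _ _
  have hM0 : 0 ≤ M :=
    le_trans (sub_nonneg.2 (hmono ∅ (G l) (Finset.empty_subset _))) hM2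
  have key2 : (1 - Real.exp (-γ)) * (f ∅ - f Sstar) ≤ f ∅ - f (G (l + 1)) := by
    nlinarith
  have key3 : γ * (f ∅ - f (G (l + 1))) ≤ γ * M + M := by
    have h1 : γ * (f ∅ - f (G l)) ≤ γ * M := mul_le_mul_of_nonneg_left hM2 hγ0.le
    nlinarith
  have key4 : γ * ((1 - Real.exp (-γ)) * (f ∅ - f Sstar)) ≤ γ * M + M :=
    le_trans (mul_le_mul_of_nonneg_left key2 hγ0.le) key3
  have h2M : γ * M + M ≤ 2 * M := by nlinarith
  rw [ge_iff_le]
  nlinarith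
end

section
/- Let 𝒱 be a finite set, f a non-increasing set function on 𝒱, γ ∈ (0,1] a supermodularity-ratio lower bound for f, c a cost function on 𝒱, and b > 0 a budget. Let S* ⊆ 𝒱 satisfy c(S*) ≤ b, and assume γ·c(v) ≤ c(S*) for every v ∈ 𝒱. Let s₁, …, s_l be a greedy sequence for (f, c) with G_l = {s₁,…,s_l}. Then f(∅) − f(G_l) ≥ (1 − e^{−γ·c(G_l)/b})·(f(∅) − f(S*)). -/
open Finset Real

lemma fill_in {α : Type*} [DecidableEq α] (f : Finset α → ℝ) (γ : ℝ)
    (hratio : ∀ A B : Finset α, A ⊆ B → ∀ v ∉ B,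
      f A - f (insert v A) ≥ γ * (f B - f (insert v B)))
    (G : Finset α) :
    ∀ T : Finset α, γ * (f G - f (G ∪ T)) ≤ ∑ v ∈ T \ G, (f G - f (insert v G)) := by
  intro T
  induction T using Finset.induction_on with
  | empty => simp
  | @insert w T' hw ih =>
    by_cases hwG : w ∈ G
    · have h1 : G ∪ insert w T' = G ∪ T' := by
        rw [Finset.union_insert, Finset.insert_eq_self.mpr (Finset.mem_union_left _ hwG)]
      have h2 : (insert w T') \ G = T' \ G := by
        rw [Finset.insert_sdiff_of_mem _ hwG]
      rw [h1, h2]; exact ih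
    · have hwGT : w ∉ G ∪ T' := by simp [hwG, hw]
      have h1 : G ∪ insert w T' = insert w (G ∪ T') := Finset.union_insert _ _ _
      have h2 : (insert w T') \ G = insert w (T' \ G) :=
        Finset.insert_sdiff_of_notMem _ hwG
      have hr := hratio G (G ∪ T') (Finset.subset_union_left) w hwGT
      have h3 : w ∉ T' \ G := fun h => hw (Finset.mem_sdiff.mp h).1
      rw [h1, h2, Finset.sum_insert h3]
      linarith

/-- bound `1 − e^{−γ·c(G_l)/b}` for the cost-constrained greedy algorithm.
Zero-indexed greedy sequence `g 0, …, g (l-1)`, with `G_l = (range l).image g`. -/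
theorem stmt_6 {α : Type*} [Fintype α] [DecidableEq α]
    (f : Finset α → ℝ)
    (hmono : ∀ A B : Finset α, A ⊆ B → f B ≤ f A)
    (γ : ℝ) (hγ0 : 0 < γ) (hγ1 : γ ≤ 1)
    (hratio : ∀ A B : Finset α, A ⊆ B → ∀ v ∉ B,
      f A - f (insert v A) ≥ γ * (f B - f (insert v B)))
    (c : α → ℝ) (hc : ∀ v, 0 < c v)
    -- a budget `b > 0`
    (b : ℝ) (hb : 0 < b)
    -- `Sstar` is within budget, and `γ·c(v) ≤ c(Sstar)` for every `v`
    (Sstar : Finset α) (hSb : ∑ v ∈ Sstar, c v ≤ b)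
    (hvS : ∀ v, γ * c v ≤ ∑ w ∈ Sstar, c w)
    -- greedy sequence `g 0, …, g (l-1)` of length `l`
    (l : ℕ) (g : ℕ → α)
    (hdist : ∀ i < l, g i ∉ (Finset.range i).image g)
    (hgreedy : ∀ i < l, ∀ a ∉ (Finset.range i).image g,
      (f ((Finset.range i).image g) - f (insert a ((Finset.range i).image g))) / c a ≤
        (f ((Finset.range i).image g) -
            f (insert (g i) ((Finset.range i).image g))) / c (g i)) :
    f ∅ - f ((Finset.range l).image g) ≥
      (1 - Real.exp (-(γ * (∑ v ∈ (Finset.range l).image g, c v) / b))) *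
        (f ∅ - f Sstar) := by
  set C : ℝ := ∑ w ∈ Sstar, c w with hCdef
  rcases Nat.eq_zero_or_pos l with hl0 | hlpos
  · subst hl0
    simp only [Finset.range_zero, Finset.image_empty, Finset.sum_empty, mul_zero,
      zero_div, neg_zero, Real.exp_zero, sub_self, zero_mul]
    linarith
  have hC : 0 < C := lt_of_lt_of_le (mul_pos hγ0 (hc (g 0))) (hvS (g 0))
  set G : ℕ → Finset α := fun i => (Finset.range i).image g with hGdef
  -- step bound
  have step : ∀ i < l, f (G (i + 1)) - f Sstar ≤
      (1 - γ * c (g i) / C) * (f (G i) - f Sstar) := by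
    intro i hi
    have hsucc : G (i + 1) = insert (g i) (G i) := by
      simp [hGdef, Finset.range_add_one]
    have hsub : G i ⊆ G (i + 1) := by rw [hsucc]; exact Finset.subset_insert _ _
    have hδ : 0 ≤ f (G i) - f (G (i+1)) := sub_nonneg.mpr (hmono _ _ hsub)
    set δ : ℝ := f (G i) - f (G (i+1)) with hδdef
    have hratiocgi : 0 ≤ δ / c (g i) := div_nonneg hδ (hc _).le
    -- each v in Sstar \ G i has marginal gain ≤ c v * (δ / c (g i))
    have hpt : ∀ v ∈ Sstar \ G i, f (G i) - f (insert v (G i)) ≤ c v * (δ / c (g i)) := by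
      intro v hv
      have hvnot : v ∉ G i := (Finset.mem_sdiff.mp hv).2
      have := hgreedy i hi v hvnot
      rw [← hsucc] at this
      have h2 : (f (G i) - f (insert v (G i))) / c v ≤ δ / c (g i) := this
      calc f (G i) - f (insert v (G i))
          = (f (G i) - f (insert v (G i))) / c v * c v := by
            rw [div_mul_cancel₀ _ (hc v).ne']
        _ ≤ δ / c (g i) * c v := mul_le_mul_of_nonneg_right h2 (hc v).le
        _ = c v * (δ / c (g i)) := mul_comm _ _
    have hsum : ∑ v ∈ Sstar \ G i, (f (G i) - f (insert v (G i)))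
        ≤ C * (δ / c (g i)) := by
      calc ∑ v ∈ Sstar \ G i, (f (G i) - f (insert v (G i)))
          ≤ ∑ v ∈ Sstar \ G i, c v * (δ / c (g i)) := Finset.sum_le_sum hpt
        _ = (∑ v ∈ Sstar \ G i, c v) * (δ / c (g i)) := by rw [Finset.sum_mul]
        _ ≤ C * (δ / c (g i)) := by
            apply mul_le_mul_of_nonneg_right _ hratiocgi
            exact Finset.sum_le_sum_of_subset_of_nonneg (Finset.sdiff_subset)
              (fun v _ _ => (hc v).le)
    have hfillin := fill_in f γ hratio (G i) Sstar
    have hmono2 : f (G i ∪ Sstar) ≤ f Sstar := hmono _ _ (Finset.subset_union_right)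
    have hkey : γ * (f (G i) - f Sstar) ≤ C * (δ / c (g i)) := by
      have : γ * (f (G i) - f Sstar) ≤ γ * (f (G i) - f (G i ∪ Sstar)) := by
        apply mul_le_mul_of_nonneg_left _ hγ0.le
        linarith
      linarith
    have hkey2 : γ * c (g i) / C * (f (G i) - f Sstar) ≤ δ := by
      rw [div_mul_eq_mul_div, div_le_iff₀ hC]
      have h3 : γ * (f (G i) - f Sstar) * c (g i) ≤ C * (δ / c (g i)) * c (g i) :=
        mul_le_mul_of_nonneg_right hkey (hc _).le
      rw [mul_assoc C, div_mul_cancel₀ _ (hc (g i)).ne'] at h3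
      nlinarith [h3]
    nlinarith [hkey2]
  -- main induction
  have hfac : ∀ j, 0 ≤ 1 - γ * c (g j) / C := by
    intro j
    have := hvS (g j)
    rw [sub_nonneg, div_le_one hC]
    exact this
  have main : ∀ i ≤ l, f (G i) - f Sstar ≤
      (f ∅ - f Sstar) * ∏ j ∈ Finset.range i, (1 - γ * c (g j) / C) := by
    intro i
    induction i with
    | zero => intro _; simp [hGdef]
    | succ n ih =>
      intro hn
      have hnl : n < l := hn
      have ih' := ih hnl.le
      have hPi : (0:ℝ) ≤ ∏ j ∈ Finset.range n, (1 - γ * c (g j) / C) :=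
        Finset.prod_nonneg (fun j _ => hfac j)
      calc f (G (n+1)) - f Sstar
          ≤ (1 - γ * c (g n) / C) * (f (G n) - f Sstar) := step n hnl
        _ ≤ (1 - γ * c (g n) / C) *
            ((f ∅ - f Sstar) * ∏ j ∈ Finset.range n, (1 - γ * c (g j) / C)) :=
            mul_le_mul_of_nonneg_left ih' (hfac n)
        _ = (f ∅ - f Sstar) * ∏ j ∈ Finset.range (n+1), (1 - γ * c (g j) / C) := by
            rw [Finset.prod_range_succ]; ring
  -- product bound by exponential
  have hinj : ∀ x ∈ Finset.range l, ∀ y ∈ Finset.range l, g x = g y → x = y := by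
    intro x hx y hy hxy
    by_contra hne
    rcases lt_or_gt_of_ne hne with h | h
    · exact hdist y (Finset.mem_range.mp hy)
        (Finset.mem_image.mpr ⟨x, Finset.mem_range.mpr h, hxy⟩)
    · exact hdist x (Finset.mem_range.mp hx)
        (Finset.mem_image.mpr ⟨y, Finset.mem_range.mpr h, hxy.symm⟩)
  have hsumeq : (∑ v ∈ (Finset.range l).image g, c v) = ∑ j ∈ Finset.range l, c (g j) :=
    Finset.sum_image hinj
  set S : ℝ := ∑ j ∈ Finset.range l, c (g j) with hSdef
  have hSnn : 0 ≤ S := Finset.sum_nonneg (fun j _ => (hc _).le)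
  have hprodexp : ∏ j ∈ Finset.range l, (1 - γ * c (g j) / C)
      ≤ Real.exp (-(γ * S / b)) := by
    calc ∏ j ∈ Finset.range l, (1 - γ * c (g j) / C)
        ≤ ∏ j ∈ Finset.range l, Real.exp (-(γ * c (g j) / C)) := by
          apply Finset.prod_le_prod (fun j _ => hfac j)
          intro j _
          have := Real.add_one_le_exp (-(γ * c (g j) / C))
          linarith
      _ = Real.exp (∑ j ∈ Finset.range l, -(γ * c (g j) / C)) := (Real.exp_sum _ _).symm
      _ = Real.exp (-(γ * S / C)) := by
          congr 1
          rw [hSdef, Finset.mul_sum, Finset.sum_div]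
          exact Finset.sum_neg_distrib _
      _ ≤ Real.exp (-(γ * S / b)) := by
          apply Real.exp_le_exp.mpr
          have hγS : 0 ≤ γ * S := mul_nonneg hγ0.le hSnn
          have : γ * S / b ≤ γ * S / C := div_le_div_of_nonneg_left hγS hC hSb
          linarith
  have h0 : 0 ≤ f ∅ - f Sstar := sub_nonneg.mpr (hmono ∅ Sstar (Finset.empty_subset _))
  have hfin : f (G l) - f Sstar ≤ (f ∅ - f Sstar) * Real.exp (-(γ * S / b)) := by
    calc f (G l) - f Sstar
        ≤ (f ∅ - f Sstar) * ∏ j ∈ Finset.range l, (1 - γ * c (g j) / C) := main l le_rfl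
      _ ≤ (f ∅ - f Sstar) * Real.exp (-(γ * S / b)) :=
          mul_le_mul_of_nonneg_left hprodexp h0
  rw [hsumeq]
  have hGl : f (G l) = f ((Finset.range l).image g) := rfl
  nlinarith [hfin]
end

section
/- Let 𝒱 be a finite set, f a non-increasing set function on 𝒱, γ ∈ (0,1] a supermodularity-ratio lower bound for f, and c a cost function on 𝒱. Let κ be a real number and let S* ⊆ 𝒱 satisfy f(S*) ≤ κ. Let s₁, …, s_l (with l ≥ 1) be a greedy sequence for (f, c) with G_i = {s₁,…,s_i}, such that f(G_{l−1}) > κ and f(G_l) ≤ κ. Assume γ·c(s_j) ≤ c(S*) for every j ∈ {1,…,l−1}. Then c(G_l) ≤ c(s_l) + (1/γ)·log( (f(∅) − κ)/(f(G_{l−1}) − κ) )·c(S*). -/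
open Finset Real

/-- cost bound for the greedy algorithm for minimum-cost subset selection
subject to a value bound `κ`. Zero-indexed greedy sequence `g 0, …, g (l-1)` of length
`l ≥ 1`, with `G i = (range i).image g`; the last added element `s_l` is `g (l-1)`. -/
theorem stmt_7 {α : Type*} [Fintype α] [DecidableEq α]
    (f : Finset α → ℝ)
    (hmono : ∀ A B : Finset α, A ⊆ B → f B ≤ f A)
    (γ : ℝ) (hγ0 : 0 < γ) (hγ1 : γ ≤ 1)
    (hratio : ∀ A B : Finset α, A ⊆ B → ∀ v ∉ B,
      f A - f (insert v A) ≥ γ * (f B - f (insert v B)))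
    (c : α → ℝ) (hc : ∀ v, 0 < c v)
    -- `Sstar` meets the value bound `κ`
    (κ : ℝ) (Sstar : Finset α) (hSκ : f Sstar ≤ κ)
    -- greedy sequence of length `l ≥ 1`
    (l : ℕ) (hl : 1 ≤ l) (g : ℕ → α)
    (hdist : ∀ i < l, g i ∉ (Finset.range i).image g)
    (hgreedy : ∀ i < l, ∀ a ∉ (Finset.range i).image g,
      (f ((Finset.range i).image g) - f (insert a ((Finset.range i).image g))) / c a ≤
        (f ((Finset.range i).image g) -
            f (insert (g i) ((Finset.range i).image g))) / c (g i))
    -- `f(G_{l-1}) > κ` and `f(G_l) ≤ κ`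
    (hGlpred : f ((Finset.range (l - 1)).image g) > κ)
    (hGl : f ((Finset.range l).image g) ≤ κ)
    -- `γ·c(s_j) ≤ c(Sstar)` for every `j ∈ {1, …, l−1}`, i.e. zero-indexed `j < l - 1`
    (hcost : ∀ j < l - 1, γ * c (g j) ≤ ∑ v ∈ Sstar, c v) :
    ∑ v ∈ (Finset.range l).image g, c v ≤
      c (g (l - 1)) +
        1 / γ * Real.log ((f ∅ - κ) / (f ((Finset.range (l - 1)).image g) - κ)) *
          (∑ v ∈ Sstar, c v) := by
  set C := ∑ v ∈ Sstar, c v with hCdef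
  set G : ℕ → Finset α := fun i => (Finset.range i).image g with hGdef
  have hGsub : ∀ i j : ℕ, i ≤ j → G i ⊆ G j := fun i j h =>
    Finset.image_subset_image (Finset.range_subset_range.2 h)
  have hG0 : G 0 = ∅ := by simp [hGdef]
  have hDpos : ∀ i ≤ l - 1, 0 < f (G i) - κ := by
    intro i hi
    have h1 := hmono (G i) (G (l - 1)) (hGsub i (l - 1) hi)
    have h2 : κ < f (G (l - 1)) := hGlpred
    linarith
  have hCpos : 0 < C := by
    rcases Sstar.eq_empty_or_nonempty with h | h
    · exfalso
      have := hDpos 0 (Nat.zero_le _)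
      rw [hG0] at this
      rw [h] at hSκ
      linarith
    · exact Finset.sum_pos (fun v _ => hc v) h
  -- key submodularity-chain lemma
  have L1 : ∀ (T A : Finset α), γ * (f A - f (A ∪ T)) ≤ ∑ v ∈ T, (f A - f (insert v A)) := by
    intro T A
    induction T using Finset.induction_on with
    | empty => simp
    | @insert v T hv ih =>
      rw [Finset.sum_insert hv, Finset.union_insert]
      have hmA : 0 ≤ f A - f (insert v A) :=
        sub_nonneg.2 (hmono A (insert v A) (Finset.subset_insert _ _))
      by_cases hvA : v ∈ A ∪ T
      · rw [Finset.insert_eq_self.2 hvA]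
        linarith
      · have h2 := hratio A (A ∪ T) Finset.subset_union_left v hvA
        have hexp : γ * (f A - f (insert v (A ∪ T))) =
            γ * (f A - f (A ∪ T)) + γ * (f (A ∪ T) - f (insert v (A ∪ T))) := by ring
        linarith
  -- per-step inequality
  have key : ∀ i < l - 1, γ * c (g i) / C ≤
      Real.log (f (G i) - κ) - Real.log (f (G (i + 1)) - κ) := by
    intro i hi
    have hDi := hDpos i (le_of_lt hi)
    have hDi1 := hDpos (i + 1) (by omega)
    have hil : i < l := by omega
    have hGsucc : G (i + 1) = insert (g i) (G i) := by
      simp [hGdef, Finset.range_add_one, Finset.image_insert]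
    set ρ := (f (G i) - f (insert (g i) (G i))) / c (g i) with hρ
    have hρ0 : 0 ≤ ρ :=
      div_nonneg (sub_nonneg.2 (hmono _ _ (Finset.subset_insert _ _))) (hc _).le
    have h1 : f (G i ∪ Sstar) ≤ κ :=
      le_trans (hmono Sstar (G i ∪ Sstar) Finset.subset_union_right) hSκ
    have h2 := L1 Sstar (G i)
    have h3 : ∑ v ∈ Sstar, (f (G i) - f (insert v (G i))) ≤ ∑ v ∈ Sstar, c v * ρ := by
      apply Finset.sum_le_sum
      intro v hv
      by_cases hvG : v ∈ G i
      · rw [Finset.insert_eq_self.2 hvG]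
        simp only [sub_self]
        exact mul_nonneg (hc v).le hρ0
      · have hg := hgreedy i hil v hvG
        have := (div_le_iff₀ (hc v)).1 hg
        calc f (G i) - f (insert v (G i)) ≤ ρ * c v := this
          _ = c v * ρ := mul_comm _ _
    have h4 : ∑ v ∈ Sstar, c v * ρ = C * ρ := by
      rw [← Finset.sum_mul]
    have h5 : γ * (f (G i) - κ) ≤ C * ρ := by
      have hmul : γ * (f (G i) - κ) ≤ γ * (f (G i) - f (G i ∪ Sstar)) := by
        have : f (G i) - κ ≤ f (G i) - f (G i ∪ Sstar) := by linarith
        exact mul_le_mul_of_nonneg_left this hγ0.le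
      linarith
    have h6 : γ * c (g i) * (f (G i) - κ) ≤ C * (f (G i) - f (G (i + 1))) := by
      have hmul := mul_le_mul_of_nonneg_right h5 (hc (g i)).le
      have hcanc : ρ * c (g i) = f (G i) - f (insert (g i) (G i)) :=
        div_mul_cancel₀ _ (hc (g i)).ne'
      rw [hGsucc]
      nlinarith [hmul, hcanc]
    have h7 : γ * c (g i) / C ≤ (f (G i) - f (G (i + 1))) / (f (G i) - κ) := by
      rw [div_le_div_iff₀ hCpos hDi]
      nlinarith [h6]
    have h8 : (f (G i) - f (G (i + 1))) / (f (G i) - κ) =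
        1 - (f (G (i + 1)) - κ) / (f (G i) - κ) := by
      field_simp
      ring
    have hlog : Real.log ((f (G (i + 1)) - κ) / (f (G i) - κ)) ≤
        (f (G (i + 1)) - κ) / (f (G i) - κ) - 1 :=
      Real.log_le_sub_one_of_pos (div_pos hDi1 hDi)
    rw [Real.log_div hDi1.ne' hDi.ne'] at hlog
    linarith
  -- sum the per-step inequalities
  have hsum : ∑ i ∈ Finset.range (l - 1), γ * c (g i) / C ≤
      Real.log (f (G 0) - κ) - Real.log (f (G (l - 1)) - κ) := by
    calc ∑ i ∈ Finset.range (l - 1), γ * c (g i) / C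
        ≤ ∑ i ∈ Finset.range (l - 1),
            (Real.log (f (G i) - κ) - Real.log (f (G (i + 1)) - κ)) :=
          Finset.sum_le_sum (fun i hi => key i (Finset.mem_range.1 hi))
      _ = Real.log (f (G 0) - κ) - Real.log (f (G (l - 1)) - κ) :=
          Finset.sum_range_sub' (fun i => Real.log (f (G i) - κ)) (l - 1)
  have hsum' : ∑ i ∈ Finset.range (l - 1), c (g i) ≤
      1 / γ * Real.log ((f ∅ - κ) / (f (G (l - 1)) - κ)) * C := by
    have heq : ∑ i ∈ Finset.range (l - 1), γ * c (g i) / C =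
        γ / C * ∑ i ∈ Finset.range (l - 1), c (g i) := by
      rw [Finset.mul_sum]
      apply Finset.sum_congr rfl
      intro i _
      ring
    rw [heq] at hsum
    have hD0 := hDpos 0 (Nat.zero_le _)
    have hDl := hDpos (l - 1) le_rfl
    rw [hG0] at hsum hD0
    rw [Real.log_div hD0.ne' hDl.ne']
    rw [div_mul_eq_mul_div] at hsum
    have h := (div_le_iff₀ hCpos).1 hsum
    calc ∑ i ∈ Finset.range (l - 1), c (g i)
        = 1 / γ * (γ * ∑ i ∈ Finset.range (l - 1), c (g i)) := by field_simp
      _ ≤ 1 / γ * ((Real.log (f ∅ - κ) - Real.log (f (G (l - 1)) - κ)) * C) :=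
          mul_le_mul_of_nonneg_left h (by positivity)
      _ = 1 / γ * (Real.log (f ∅ - κ) - Real.log (f (G (l - 1)) - κ)) * C := by ring
  -- rewrite LHS as sum over range
  have hinj : ∀ i ∈ Finset.range l, ∀ j ∈ Finset.range l, g i = g j → i = j := by
    intro i hi j hj hij
    rcases Nat.lt_trichotomy i j with h | h | h
    · exact absurd (Finset.mem_image.2 ⟨i, Finset.mem_range.2 h, hij⟩)
        (hdist j (Finset.mem_range.1 hj))
    · exact h
    · exact absurd (Finset.mem_image.2 ⟨j, Finset.mem_range.2 h, hij.symm⟩)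
        (hdist i (Finset.mem_range.1 hi))
  have hLHS : ∑ v ∈ (Finset.range l).image g, c v = ∑ i ∈ Finset.range l, c (g i) :=
    Finset.sum_image hinj
  have hlsplit : l = (l - 1) + 1 := (Nat.succ_pred_eq_of_pos hl).symm
  have hsplit : ∑ i ∈ Finset.range l, c (g i) =
      ∑ i ∈ Finset.range (l - 1), c (g i) + c (g (l - 1)) := by
    conv_lhs => rw [hlsplit]
    rw [Finset.sum_range_succ]
  rw [hLHS, hsplit]
  simp only [hGdef] at hsum'
  linarith [hsum']
end

section
/- Under the sensor-indexed Kalman recursion, let Θ₁, …, Θ_T be n×n positive semidefinite real matrices. Then the set function S ↦ Σ_{t=1}^{T} tr(Θ_t Σ_t(S)) is non-increasing: for all S₁ ⊆ S₂ ⊆ 𝒱, Σ_{t=1}^{T} tr(Θ_t Σ_t(S₁)) ≥ Σ_{t=1}^{T} tr(Θ_t Σ_t(S₂)). -/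
open Matrix

section Aux
variable {n : ℕ}

private lemma kal_trace_nonneg {M : Matrix (Fin n) (Fin n) ℝ} (hM : M.PosSemidef) :
    0 ≤ M.trace := by
  rw [Matrix.trace]
  refine Finset.sum_nonneg fun i _ => ?_
  have h := hM.dotProduct_mulVec_nonneg (Pi.single i 1)
  simpa [dotProduct, Matrix.mulVec, Pi.single_apply, Matrix.diag] using h

private lemma kal_trace_mul_nonneg {Θ M : Matrix (Fin n) (Fin n) ℝ} (hΘ : Θ.PosSemidef)
    (hM : M.PosSemidef) : 0 ≤ (Θ * M).trace := by
  obtain ⟨B, rfl⟩ : ∃ B : Matrix (Fin n) (Fin n) ℝ, Θ = Bᵀ * B := by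
    open scoped MatrixOrder in
    obtain ⟨B, hB⟩ := CStarAlgebra.nonneg_iff_eq_star_mul_self.mp hΘ.nonneg
    exact ⟨B, hB⟩
  rw [Matrix.mul_assoc, Matrix.trace_mul_comm]
  exact kal_trace_nonneg (by simpa [Matrix.mul_assoc] using hM.mul_mul_conjTranspose_same B)

private lemma kal_symm_dot {A : Matrix (Fin n) (Fin n) ℝ} (h : Aᵀ = A) (y w : Fin n → ℝ) :
    (A *ᵥ y) ⬝ᵥ w = y ⬝ᵥ (A *ᵥ w) := by
  conv_lhs => rw [← h]
  rw [Matrix.mulVec_transpose, ← Matrix.dotProduct_mulVec]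

private lemma kal_inv_antitone {A B : Matrix (Fin n) (Fin n) ℝ} (hA : A.PosDef) (hB : B.PosDef)
    (hAB : (B - A).PosSemidef) : (A⁻¹ - B⁻¹).PosSemidef := by
  have hAt : Aᵀ = A := by
    have := hA.isHermitian
    rwa [Matrix.IsHermitian, Matrix.conjTranspose_eq_transpose_of_trivial] at this
  have hAit : (A⁻¹)ᵀ = A⁻¹ := by
    have := hA.inv.isHermitian
    rwa [Matrix.IsHermitian, Matrix.conjTranspose_eq_transpose_of_trivial] at this
  refine Matrix.PosSemidef.of_dotProduct_mulVec_nonneg (hA.inv.isHermitian.sub hB.inv.isHermitian) fun x => ?_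
  set y : Fin n → ℝ := B⁻¹ *ᵥ x with hy
  have hdA : IsUnit A.det := hA.det_pos.ne'.isUnit
  have hdB : IsUnit B.det := hB.det_pos.ne'.isUnit
  have hBy : B *ᵥ y = x := by
    rw [hy, Matrix.mulVec_mulVec, Matrix.mul_nonsing_inv _ hdB, Matrix.one_mulVec]
  have hAAi : A *ᵥ (A⁻¹ *ᵥ x) = x := by
    rw [Matrix.mulVec_mulVec, Matrix.mul_nonsing_inv _ hdA, Matrix.one_mulVec]
  have hAy : A⁻¹ *ᵥ (A *ᵥ y) = y := by
    rw [Matrix.mulVec_mulVec, Matrix.nonsing_inv_mul _ hdA, Matrix.one_mulVec]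
  have f1 : y ⬝ᵥ (B *ᵥ y) = x ⬝ᵥ y := by
    rw [hBy, dotProduct_comm]
  have f2 : y ⬝ᵥ (A *ᵥ y) ≤ x ⬝ᵥ y := by
    have h := hAB.dotProduct_mulVec_nonneg y
    rw [star_trivial, Matrix.sub_mulVec, dotProduct_sub, f1] at h
    linarith
  have f3 : 0 ≤ x ⬝ᵥ (A⁻¹ *ᵥ x) - 2 * (x ⬝ᵥ y) + y ⬝ᵥ (A *ᵥ y) := by
    have h := hA.inv.posSemidef.dotProduct_mulVec_nonneg (x - A *ᵥ y)
    rw [star_trivial, Matrix.mulVec_sub, dotProduct_sub, sub_dotProduct,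
      sub_dotProduct, hAy] at h
    have e1 : (A *ᵥ y) ⬝ᵥ (A⁻¹ *ᵥ x) = y ⬝ᵥ x := by
      rw [kal_symm_dot hAt, hAAi]
    have e2 : (A *ᵥ y) ⬝ᵥ y = y ⬝ᵥ (A *ᵥ y) := kal_symm_dot hAt y y
    have e3 : y ⬝ᵥ x = x ⬝ᵥ y := dotProduct_comm y x
    rw [e1, e2, e3] at h
    linarith
  have goal : x ⬝ᵥ ((A⁻¹ - B⁻¹) *ᵥ x) = x ⬝ᵥ (A⁻¹ *ᵥ x) - x ⬝ᵥ y := by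
    rw [Matrix.sub_mulVec, dotProduct_sub, hy]
  rw [star_trivial, goal]
  linarith

private lemma kal_sum_psd {α : Type*} [DecidableEq α] (S : Finset α)
    (f : α → Matrix (Fin n) (Fin n) ℝ) (h : ∀ i, (f i).PosSemidef) :
    (∑ i ∈ S, f i).PosSemidef := by
  classical
  induction S using Finset.induction_on with
  | empty => simpa using Matrix.PosSemidef.zero
  | insert _ _ hx ih => rw [Finset.sum_insert hx]; exact (h _).add ih

end Aux

open Matrix Finset

/-- under the sensor-indexed Kalman recursion, for positive semidefinite
weights `Θ₁, …, Θ_T`, the set function `S ↦ Σ_{t=1}^{T} tr(Θ_t Σ_t(S))` is non-increasing: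
`S₁ ⊆ S₂` implies `Σ_t tr(Θ_t Σ_t(S₁)) ≥ Σ_t tr(Θ_t Σ_t(S₂))`. -/
theorem stmt_12 {n : ℕ} (hn : 1 ≤ n) {α : Type*} [Fintype α] [DecidableEq α]
    (T : ℕ) (hT : 1 ≤ T)
    (Sig0 : Matrix (Fin n) (Fin n) ℝ) (hSig0 : Sig0.PosDef)
    (A W : ℕ → Matrix (Fin n) (Fin n) ℝ)
    (hW : ∀ t, 1 ≤ t → t + 1 ≤ T → (W t).PosDef)
    (p : α → ℕ → ℕ)
    (C : (i : α) → (t : ℕ) → Matrix (Fin (p i t)) (Fin n) ℝ)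
    (Sig : Finset α → ℕ → Matrix (Fin n) (Fin n) ℝ)
    (hinit : ∀ S : Finset α,
      Sig S 1 = (Sig0⁻¹ + ∑ i ∈ S, (C i 1)ᵀ * C i 1)⁻¹)
    (hrec : ∀ S : Finset α, ∀ t, 1 ≤ t → t + 1 ≤ T →
      Sig S (t + 1) =
        ((A t * Sig S t * (A t)ᵀ + W t)⁻¹ + ∑ i ∈ S, (C i (t + 1))ᵀ * C i (t + 1))⁻¹)
    (Θ : ℕ → Matrix (Fin n) (Fin n) ℝ)
    (hΘ : ∀ t, 1 ≤ t → t ≤ T → (Θ t).PosSemidef) :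
    ∀ S₁ S₂ : Finset α, S₁ ⊆ S₂ →
      ∑ t ∈ Finset.Icc 1 T, (Θ t * Sig S₂ t).trace ≤
        ∑ t ∈ Finset.Icc 1 T, (Θ t * Sig S₁ t).trace := by
  intro S₁ S₂ hsub
  have hCpsd : ∀ (t : ℕ) (S : Finset α), (∑ i ∈ S, (C i t)ᵀ * C i t).PosSemidef := by
    intro t S
    refine kal_sum_psd S _ fun i => ?_
    have h := Matrix.posSemidef_conjTranspose_mul_self (C i t)
    rwa [Matrix.conjTranspose_eq_transpose_of_trivial] at h
  have hdiffpsd : ∀ t : ℕ,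
      ((∑ i ∈ S₂, (C i t)ᵀ * C i t) - ∑ i ∈ S₁, (C i t)ᵀ * C i t).PosSemidef := by
    intro t
    have h : (∑ i ∈ S₂, (C i t)ᵀ * C i t) - ∑ i ∈ S₁, (C i t)ᵀ * C i t
        = ∑ i ∈ S₂ \ S₁, (C i t)ᵀ * C i t :=
      sub_eq_iff_eq_add.mpr (Finset.sum_sdiff hsub).symm
    rw [h]
    exact hCpsd t (S₂ \ S₁)
  have key : ∀ t, 1 ≤ t → t ≤ T →
      (Sig S₁ t).PosDef ∧ (Sig S₂ t).PosDef ∧ (Sig S₁ t - Sig S₂ t).PosSemidef := by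
    intro t h1
    induction t, h1 using Nat.le_induction with
    | base =>
      intro _
      have hN : ∀ S : Finset α, (Sig0⁻¹ + ∑ i ∈ S, (C i 1)ᵀ * C i 1).PosDef :=
        fun S => hSig0.inv.add_posSemidef (hCpsd 1 S)
      refine ⟨by rw [hinit]; exact (hN S₁).inv, by rw [hinit]; exact (hN S₂).inv, ?_⟩
      rw [hinit, hinit]
      refine kal_inv_antitone (hN S₁) (hN S₂) ?_
      have e : (Sig0⁻¹ + ∑ i ∈ S₂, (C i 1)ᵀ * C i 1)
          - (Sig0⁻¹ + ∑ i ∈ S₁, (C i 1)ᵀ * C i 1)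
          = (∑ i ∈ S₂, (C i 1)ᵀ * C i 1) - ∑ i ∈ S₁, (C i 1)ᵀ * C i 1 := by abel
      rw [e]; exact hdiffpsd 1
    | succ t ht ih =>
      intro hle
      obtain ⟨h1, h2, h12⟩ := ih (Nat.le_of_succ_le hle)
      have hM : ∀ {S : Finset α}, (Sig S t).PosDef →
          (A t * Sig S t * (A t)ᵀ + W t).PosDef := by
        intro S hS
        have hc := hS.posSemidef.mul_mul_conjTranspose_same (A t)
        rw [Matrix.conjTranspose_eq_transpose_of_trivial] at hc
        exact Matrix.PosDef.posSemidef_add hc (hW t ht hle)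
      have hM1 := hM h1
      have hM2 := hM h2
      have hMdiff : ((A t * Sig S₁ t * (A t)ᵀ + W t)
          - (A t * Sig S₂ t * (A t)ᵀ + W t)).PosSemidef := by
        have e : (A t * Sig S₁ t * (A t)ᵀ + W t) - (A t * Sig S₂ t * (A t)ᵀ + W t)
            = A t * (Sig S₁ t - Sig S₂ t) * (A t)ᵀ := by
          rw [Matrix.mul_sub, Matrix.sub_mul]; abel
        rw [e]
        have hc := h12.mul_mul_conjTranspose_same (A t)
        rwa [Matrix.conjTranspose_eq_transpose_of_trivial] at hc
      have hMinv : ((A t * Sig S₂ t * (A t)ᵀ + W t)⁻¹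
          - (A t * Sig S₁ t * (A t)ᵀ + W t)⁻¹).PosSemidef :=
        kal_inv_antitone hM2 hM1 hMdiff
      have hN : ∀ {S : Finset α}, (Sig S t).PosDef →
          ((A t * Sig S t * (A t)ᵀ + W t)⁻¹
            + ∑ i ∈ S, (C i (t + 1))ᵀ * C i (t + 1)).PosDef :=
        fun hS => (hM hS).inv.add_posSemidef (hCpsd (t + 1) _)
      have hN1 := hN h1
      have hN2 := hN h2
      have hNdiff : (((A t * Sig S₂ t * (A t)ᵀ + W t)⁻¹
            + ∑ i ∈ S₂, (C i (t + 1))ᵀ * C i (t + 1))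
          - ((A t * Sig S₁ t * (A t)ᵀ + W t)⁻¹
            + ∑ i ∈ S₁, (C i (t + 1))ᵀ * C i (t + 1))).PosSemidef := by
        have e : (((A t * Sig S₂ t * (A t)ᵀ + W t)⁻¹
              + ∑ i ∈ S₂, (C i (t + 1))ᵀ * C i (t + 1))
            - ((A t * Sig S₁ t * (A t)ᵀ + W t)⁻¹
              + ∑ i ∈ S₁, (C i (t + 1))ᵀ * C i (t + 1)))
            = ((A t * Sig S₂ t * (A t)ᵀ + W t)⁻¹
                - (A t * Sig S₁ t * (A t)ᵀ + W t)⁻¹)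
              + ((∑ i ∈ S₂, (C i (t + 1))ᵀ * C i (t + 1))
                - ∑ i ∈ S₁, (C i (t + 1))ᵀ * C i (t + 1)) := by abel
        rw [e]
        exact hMinv.add (hdiffpsd (t + 1))
      refine ⟨?_, ?_, ?_⟩
      · rw [hrec S₁ t ht hle]; exact hN1.inv
      · rw [hrec S₂ t ht hle]; exact hN2.inv
      · rw [hrec S₁ t ht hle, hrec S₂ t ht hle]
        exact kal_inv_antitone hN1 hN2 hNdiff
  refine Finset.sum_le_sum fun t ht => ?_
  rw [Finset.mem_Icc] at ht
  obtain ⟨hpd1, hpd2, hdiff⟩ := key t ht.1 ht.2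
  have h := kal_trace_mul_nonneg (hΘ t ht.1 ht.2) hdiff
  rw [Matrix.mul_sub, Matrix.trace_sub] at h
  linarith
end

section
/- Fix an integer T ≥ 1 and, for t = 1, …, T, let A_t be an n×n real matrix, B_t an n×m_t real matrix, Q_t an n×n symmetric positive definite real matrix, and R_t an m_t×m_t symmetric positive definite real matrix. Define the backward Riccati recursion: N_{T+1} = 0 and, for t = T, T−1, …, 1, S_t = Q_t + N_{t+1} and N_t = A_tᵀ(S_t⁻¹ + B_t R_t⁻¹ B_tᵀ)⁻¹ A_t; also define M_t = B_tᵀ S_t B_t + R_t, K_t = −M_t⁻¹ B_tᵀ S_t A_t, and Θ_t = K_tᵀ M_t K_t. Writing U_t = A_{t−1} A_{t−2} ⋯ A₁ (with U₁ the identity matrix) and V_t = A_t A_{t−1} ⋯ A₁, it holds that Σ_{t=1}^{T} U_tᵀ Θ_t U_t = Σ_{t=1}^{T} V_tᵀ Q_t V_t − N₁. -/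
open Matrix Finset

lemma riccati_woodbury {n m : ℕ} (S : Matrix (Fin n) (Fin n) ℝ)
    (Bm : Matrix (Fin n) (Fin m) ℝ) (R : Matrix (Fin m) (Fin m) ℝ)
    (hS : S.PosDef) (hR : R.PosDef) :
    (S⁻¹ + Bm * R⁻¹ * Bmᵀ)⁻¹ =
      S - S * Bm * (Bmᵀ * S * Bm + R)⁻¹ * Bmᵀ * S := by
  have hSinv : S⁻¹⁻¹ = S := Matrix.nonsing_inv_nonsing_inv S
    ((Matrix.isUnit_iff_isUnit_det S).mp hS.isUnit)
  have hRinv : (R⁻¹)⁻¹ = R := Matrix.nonsing_inv_nonsing_inv R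
    ((Matrix.isUnit_iff_isUnit_det R).mp hR.isUnit)
  have h1 : (Bmᵀ * S * Bm).PosSemidef := by
    have := hS.posSemidef.conjTranspose_mul_mul_same Bm
    rwa [Matrix.conjTranspose_eq_transpose_of_trivial] at this
  have hMpd : (Bmᵀ * S * Bm + R).PosDef := Matrix.PosDef.posSemidef_add h1 hR
  have hw := Matrix.add_mul_mul_inv_eq_sub S⁻¹ Bm (R⁻¹) Bmᵀ
    hS.inv.isUnit hR.inv.isUnit
    (by rw [hRinv, hSinv, add_comm]; exact hMpd.isUnit)
  rw [hRinv, hSinv, add_comm R (Bmᵀ * S * Bm)] at hw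
  exact hw

/-- for the backward Riccati recursion `N_{T+1} = 0`,
`S_t = Q_t + N_{t+1}`, `N_t = A_tᵀ(S_t⁻¹ + B_t R_t⁻¹ B_tᵀ)⁻¹ A_t`, with
`M_t = B_tᵀ S_t B_t + R_t`, `K_t = −M_t⁻¹ B_tᵀ S_t A_t`, `Θ_t = K_tᵀ M_t K_t`,
and the state-transition products `U₁ = 1`, `U_{t+1} = A_t U_t` (so `U_t = A_{t−1}⋯A₁`)
and `V_t = A_t U_t = A_t⋯A₁`, it holds that
`Σ_{t=1}^{T} U_tᵀ Θ_t U_t = Σ_{t=1}^{T} V_tᵀ Q_t V_t − N₁`. -/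
theorem stmt_14 {n : ℕ} (T : ℕ) (hT : 1 ≤ T)
    (m : ℕ → ℕ)
    (A : ℕ → Matrix (Fin n) (Fin n) ℝ)
    (B : (t : ℕ) → Matrix (Fin n) (Fin (m t)) ℝ)
    (Q : ℕ → Matrix (Fin n) (Fin n) ℝ)
    (hQ : ∀ t, 1 ≤ t → t ≤ T → (Q t).PosDef)
    (R : (t : ℕ) → Matrix (Fin (m t)) (Fin (m t)) ℝ)
    (hR : ∀ t, 1 ≤ t → t ≤ T → (R t).PosDef)
    -- backward Riccati recursion
    (N Sm : ℕ → Matrix (Fin n) (Fin n) ℝ)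
    (hNT : N (T + 1) = 0)
    (hSm : ∀ t, 1 ≤ t → t ≤ T → Sm t = Q t + N (t + 1))
    (hN : ∀ t, 1 ≤ t → t ≤ T →
      N t = (A t)ᵀ * ((Sm t)⁻¹ + B t * (R t)⁻¹ * (B t)ᵀ)⁻¹ * A t)
    -- control gain quantities
    (M : (t : ℕ) → Matrix (Fin (m t)) (Fin (m t)) ℝ)
    (hM : ∀ t, 1 ≤ t → t ≤ T → M t = (B t)ᵀ * Sm t * B t + R t)
    (K : (t : ℕ) → Matrix (Fin (m t)) (Fin n) ℝ)
    (hK : ∀ t, 1 ≤ t → t ≤ T → K t = -((M t)⁻¹ * (B t)ᵀ * Sm t * A t))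
    (Θ : ℕ → Matrix (Fin n) (Fin n) ℝ)
    (hΘ : ∀ t, 1 ≤ t → t ≤ T → Θ t = (K t)ᵀ * M t * K t)
    -- state-transition products `U_t = A_{t−1}⋯A₁`, `U₁ = 1`
    (U : ℕ → Matrix (Fin n) (Fin n) ℝ)
    (hU1 : U 1 = 1)
    (hUrec : ∀ t, 1 ≤ t → U (t + 1) = A t * U t) :
    ∑ t ∈ Finset.Icc 1 T, (U t)ᵀ * Θ t * U t =
      (∑ t ∈ Finset.Icc 1 T, (A t * U t)ᵀ * Q t * (A t * U t)) - N 1 := by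
  -- N is positive semidefinite on [1, T+1]
  have hNpsd : ∀ k t, t + k = T + 1 → 1 ≤ t → (N t).PosSemidef := by
    intro k
    induction k with
    | zero =>
      intro t ht _
      simp only [Nat.add_zero] at ht
      rw [ht, hNT]
      exact Matrix.PosSemidef.zero
    | succ k ih =>
      intro t ht h1
      have htT : t ≤ T := by omega
      have hNt1 : (N (t + 1)).PosSemidef := ih (t + 1) (by omega) (by omega)
      have hSpd : (Sm t).PosDef := by
        rw [hSm t h1 htT]
        exact (hQ t h1 htT).add_posSemidef hNt1
      have hXpd : ((Sm t)⁻¹ + B t * (R t)⁻¹ * (B t)ᵀ).PosDef := by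
        refine (hSpd.inv).add_posSemidef ?_
        have := (hR t h1 htT).inv.posSemidef.mul_mul_conjTranspose_same (B t)
        rwa [Matrix.conjTranspose_eq_transpose_of_trivial] at this
      rw [hN t h1 htT]
      have := hXpd.inv.posSemidef.conjTranspose_mul_mul_same (A t)
      rwa [Matrix.conjTranspose_eq_transpose_of_trivial] at this
  -- per-step identity
  have step : ∀ t, 1 ≤ t → t ≤ T →
      (U t)ᵀ * Θ t * U t =
        (A t * U t)ᵀ * Q t * (A t * U t) +
          ((U (t + 1))ᵀ * N (t + 1) * U (t + 1) - (U t)ᵀ * N t * U t) := by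
    intro t h1 htT
    have hNt1 : (N (t + 1)).PosSemidef := hNpsd (T - t) (t + 1) (by omega) (by omega)
    have hSpd : (Sm t).PosDef := by
      rw [hSm t h1 htT]
      exact (hQ t h1 htT).add_posSemidef hNt1
    have hRt := hR t h1 htT
    have hSsym : (Sm t)ᵀ = Sm t := by
      have := hSpd.isHermitian
      rwa [Matrix.IsHermitian, Matrix.conjTranspose_eq_transpose_of_trivial] at this
    have hRsym : (R t)ᵀ = R t := by
      have := hRt.isHermitian
      rwa [Matrix.IsHermitian, Matrix.conjTranspose_eq_transpose_of_trivial] at this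
    have hMsym : (M t)ᵀ = M t := by
      rw [hM t h1 htT, Matrix.transpose_add, Matrix.transpose_mul, Matrix.transpose_mul,
        Matrix.transpose_transpose, hSsym, hRsym, Matrix.mul_assoc]
    have hMpd : (M t).PosDef := by
      rw [hM t h1 htT]
      refine Matrix.PosDef.posSemidef_add ?_ hRt
      have := hSpd.posSemidef.conjTranspose_mul_mul_same (B t)
      rwa [Matrix.conjTranspose_eq_transpose_of_trivial] at this
    have hMdet : IsUnit (M t).det := (Matrix.isUnit_iff_isUnit_det (M t)).mp hMpd.isUnit
    -- Θ t = (A t)ᵀ * Sm t * B t * (M t)⁻¹ * (B t)ᵀ * Sm t * A t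
    have hMK : M t * K t = -((B t)ᵀ * Sm t * A t) := by
      rw [hK t h1 htT, Matrix.mul_neg]
      congr 1
      rw [show (M t)⁻¹ * (B t)ᵀ * Sm t * A t = (M t)⁻¹ * ((B t)ᵀ * Sm t * A t) by
        simp [Matrix.mul_assoc], ← Matrix.mul_assoc, Matrix.mul_nonsing_inv _ hMdet,
        Matrix.one_mul]
    have hKT : (K t)ᵀ = -((A t)ᵀ * Sm t * B t * (M t)⁻¹) := by
      rw [hK t h1 htT, Matrix.transpose_neg]
      congr 1
      rw [Matrix.transpose_mul, Matrix.transpose_mul, Matrix.transpose_mul,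
        Matrix.transpose_nonsing_inv, hMsym, hSsym, Matrix.transpose_transpose]
      simp [Matrix.mul_assoc]
    have hΘeq : Θ t = (A t)ᵀ * Sm t * B t * (M t)⁻¹ * ((B t)ᵀ * Sm t * A t) := by
      rw [hΘ t h1 htT, Matrix.mul_assoc, hMK, hKT]
      simp [Matrix.mul_assoc]
    -- N t = (A t)ᵀ * Sm t * A t - Θ t
    have hNeq : N t = (A t)ᵀ * Sm t * A t - Θ t := by
      rw [hN t h1 htT, riccati_woodbury (Sm t) (B t) (R t) hSpd hRt, ← hM t h1 htT, hΘeq]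
      simp [Matrix.mul_sub, Matrix.sub_mul, Matrix.mul_assoc]
    have hΘ' : Θ t = (A t)ᵀ * (Q t + N (t + 1)) * A t - N t := by
      rw [hNeq, ← hSm t h1 htT]
      abel
    rw [hΘ', hUrec t h1]
    simp only [Matrix.transpose_mul, Matrix.mul_sub, Matrix.sub_mul, Matrix.mul_add,
      Matrix.add_mul, Matrix.mul_assoc]
    abel
  -- telescoping
  have tel : ∀ (f : ℕ → Matrix (Fin n) (Fin n) ℝ) (T' : ℕ),
      ∑ t ∈ Finset.Icc 1 T', (f (t + 1) - f t) = f (T' + 1) - f 1 := by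
    intro f T'
    induction T' with
    | zero => simp
    | succ T' ih =>
      rw [Finset.sum_Icc_succ_top (by omega), ih]
      abel
  calc ∑ t ∈ Finset.Icc 1 T, (U t)ᵀ * Θ t * U t
      = ∑ t ∈ Finset.Icc 1 T, ((A t * U t)ᵀ * Q t * (A t * U t) +
          ((fun s => (U s)ᵀ * N s * U s) (t + 1) - (fun s => (U s)ᵀ * N s * U s) t)) := by
        refine Finset.sum_congr rfl fun t ht => ?_
        rw [Finset.mem_Icc] at ht
        exact step t ht.1 ht.2
    _ = (∑ t ∈ Finset.Icc 1 T, (A t * U t)ᵀ * Q t * (A t * U t)) +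
          ((fun s => (U s)ᵀ * N s * U s) (T + 1) - (fun s => (U s)ᵀ * N s * U s) 1) := by
        rw [Finset.sum_add_distrib]
        congr 1
        exact tel (fun s => (U s)ᵀ * N s * U s) T
    _ = (∑ t ∈ Finset.Icc 1 T, (A t * U t)ᵀ * Q t * (A t * U t)) - N 1 := by
        simp [hNT, hU1, sub_eq_add_neg]
end
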